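/- Let F be the cumulative distribution function of a probability distribution supported on a finite set {a_1,…,a_m} ⊂ ℝ, let Z_1,…,Z_n be i.i.d. with CDF F, let F̂ be their empirical CDF, and let p_max^m = max_{1≤i≤m} P(Z_1 = a_i). Then for every q ∈ (0,1], E[ F(F̂⁻¹(q)) ] ≤ ⌈nq⌉ / (n+1) + p_max^m. -/

import Mathlib

open MeasureTheory ProbabilityTheory Finset
open scoped ENNReal NNReal

/-- The empirical quantile `F̂⁻¹(q) = inf{z : F̂(z) ≥ q}`, where `F̂` is the empirical
CDF of the tuple `x`. -/
noncomputable def empQuantile {n : ℕ} (x : Fin n → ℝ) (q : ℝ) : ℝ :=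
  sInf {z : ℝ | q ≤ (Set.ncard {i : Fin n | x i ≤ z} : ℝ) / n}

section Det

variable {n : ℕ} (x : Fin n → ℝ) {q : ℝ}

lemma quantSet_eq (hn : 1 ≤ n) :
    {z : ℝ | q ≤ (Set.ncard {i : Fin n | x i ≤ z} : ℝ) / n} =
      {z : ℝ | ⌈(n : ℝ) * q⌉₊ ≤ (univ.filter (fun i => x i ≤ z)).card} := by
  ext z
  have hcard : (Set.ncard {i : Fin n | x i ≤ z}) = (univ.filter (fun i => x i ≤ z)).card := by
    rw [← Set.ncard_coe_finset]
    congr 1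
    ext i; simp
  have hn0 : (0 : ℝ) < n := by exact_mod_cast hn
  simp only [Set.mem_setOf_eq, hcard]
  rw [le_div_iff₀ hn0, mul_comm, Nat.ceil_le]

lemma quantSet_closed (hn : 1 ≤ n) :
    IsClosed {z : ℝ | q ≤ (Set.ncard {i : Fin n | x i ≤ z} : ℝ) / n} := by
  rw [quantSet_eq x hn]
  have : {z : ℝ | ⌈(n : ℝ) * q⌉₊ ≤ (univ.filter (fun i => x i ≤ z)).card} =
      ⋃ T ∈ univ.powersetCard ⌈(n : ℝ) * q⌉₊, ⋂ i ∈ T, Set.Ici (x i) := by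
    ext z
    simp only [Set.mem_setOf_eq, Set.mem_iUnion, Set.mem_iInter, Finset.mem_powersetCard,
      Set.mem_Ici, exists_prop]
    constructor
    · intro h
      obtain ⟨T, hT, hTcard⟩ := Finset.exists_subset_card_eq h
      exact ⟨T, ⟨Finset.subset_univ _, hTcard⟩, fun i hi => (Finset.mem_filter.1 (hT hi)).2⟩
    · rintro ⟨T, ⟨-, hTcard⟩, h⟩
      calc ⌈(n : ℝ) * q⌉₊ = T.card := hTcard.symm
        _ ≤ _ := Finset.card_le_card fun i hi => Finset.mem_filter.2 ⟨Finset.mem_univ _, h i hi⟩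
  rw [this]
  exact isClosed_biUnion_finset fun T _ => isClosed_biInter fun i _ => isClosed_Ici

lemma quantSet_nonempty (hn : 1 ≤ n) (hq1 : q ≤ 1) :
    {z : ℝ | q ≤ (Set.ncard {i : Fin n | x i ≤ z} : ℝ) / n}.Nonempty := by
  have : Nonempty (Fin n) := ⟨⟨0, hn⟩⟩
  rw [quantSet_eq x hn]
  refine ⟨univ.sup' univ_nonempty x, ?_⟩
  have hfil : univ.filter (fun i => x i ≤ univ.sup' univ_nonempty x) = univ := by
    refine Finset.filter_true_of_mem fun i _ => Finset.le_sup' x (mem_univ i)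
  simp only [Set.mem_setOf_eq, hfil, Finset.card_univ, Fintype.card_fin]
  rw [Nat.ceil_le]
  nlinarith [hq1, (by exact_mod_cast hn : (1:ℝ) ≤ n)]

lemma quantSet_bddBelow (hn : 1 ≤ n) (hq0 : 0 < q) :
    BddBelow {z : ℝ | q ≤ (Set.ncard {i : Fin n | x i ≤ z} : ℝ) / n} := by
  have : Nonempty (Fin n) := ⟨⟨0, hn⟩⟩
  rw [quantSet_eq x hn]
  refine ⟨univ.inf' univ_nonempty x, fun z hz => ?_⟩
  simp only [Set.mem_setOf_eq] at hz
  have hk1 : 1 ≤ ⌈(n : ℝ) * q⌉₊ := by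
    rw [Nat.one_le_ceil_iff]
    positivity
  have : (univ.filter (fun i => x i ≤ z)).Nonempty := by
    rw [← Finset.card_pos]; omega
  obtain ⟨i, hi⟩ := this
  exact le_trans (Finset.inf'_le x (mem_univ i)) (Finset.mem_filter.1 hi).2

lemma empQuantile_mem (hn : 1 ≤ n) (hq0 : 0 < q) (hq1 : q ≤ 1) :
    ⌈(n : ℝ) * q⌉₊ ≤ (univ.filter (fun i => x i ≤ empQuantile x q)).card := by
  have h : empQuantile x q ∈ {z : ℝ | q ≤ (Set.ncard {i : Fin n | x i ≤ z} : ℝ) / n} :=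
    IsClosed.csInf_mem (quantSet_closed x hn (q := q))
      (quantSet_nonempty x hn hq1) (quantSet_bddBelow x hn hq0)
  rw [quantSet_eq x hn] at h
  exact h

lemma lt_empQuantile_iff (hn : 1 ≤ n) (hq0 : 0 < q) (hq1 : q ≤ 1) (z : ℝ) :
    z < empQuantile x q ↔ (univ.filter (fun i => x i ≤ z)).card < ⌈(n : ℝ) * q⌉₊ := by
  constructor
  · intro h
    by_contra hc
    push_neg at hc
    have hz : z ∈ {z : ℝ | q ≤ (Set.ncard {i : Fin n | x i ≤ z} : ℝ) / n} := by
      rw [quantSet_eq x hn]; exact hc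
    exact absurd (csInf_le (quantSet_bddBelow x hn hq0) hz) (not_le.2 h)
  · intro h
    by_contra hc
    push_neg at hc
    have hmem := empQuantile_mem x hn hq0 hq1
    have hsub : univ.filter (fun i => x i ≤ empQuantile x q) ⊆
        univ.filter (fun i => x i ≤ z) := fun i hi => by
      simp only [Finset.mem_filter] at hi ⊢
      exact ⟨hi.1, hi.2.trans hc⟩
    have := Finset.card_le_card hsub
    omega

lemma empQuantile_mem_range (hn : 1 ≤ n) (hq0 : 0 < q) (hq1 : q ≤ 1) :
    ∃ i, x i = empQuantile x q := by
  have hmem := empQuantile_mem x hn hq0 hq1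
  have hk1 : 1 ≤ ⌈(n : ℝ) * q⌉₊ := by
    rw [Nat.one_le_ceil_iff]
    have : (0:ℝ) < n := by exact_mod_cast hn
    positivity
  have hne : (univ.filter (fun i => x i ≤ empQuantile x q)).Nonempty := by
    rw [← Finset.card_pos]; omega
  set T := univ.filter (fun i => x i ≤ empQuantile x q) with hT
  obtain ⟨i0, hi0, hy⟩ := Finset.exists_mem_eq_sup' hne x
  refine ⟨i0, le_antisymm ?_ ?_⟩
  · exact (Finset.mem_filter.1 hi0).2
  · -- empQuantile ≤ x i0 = sup' since sup' is in the set S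
    have hyS : T.sup' hne x ∈ {z : ℝ | q ≤ (Set.ncard {i : Fin n | x i ≤ z} : ℝ) / n} := by
      rw [quantSet_eq x hn]
      refine le_trans hmem (Finset.card_le_card fun i hi => ?_)
      simp only [hT, Finset.mem_filter] at hi ⊢
      exact ⟨hi.1, Finset.le_sup' x (Finset.mem_filter.2 hi)⟩
    have := csInf_le (quantSet_bddBelow x hn hq0) hyS
    rw [hy] at this
    exact this

end Det


section Comb

variable {N : ℕ}

/-- At most `k` indices `j` can have fewer than `k` other indices `i` with `y i ≤ y j`. -/
lemma card_low_rank_le (y : Fin N → ℝ) (k : ℕ) :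
    (univ.filter fun j => (univ.filter fun i => i ≠ j ∧ y i ≤ y j).card < k).card ≤ k := by
  classical
  set r : Fin N → ℕ := fun j => (univ.filter fun i => y i < y j ∨ (y i = y j ∧ i < j)).card with hr
  have hlt : ∀ j j' : Fin N, (y j < y j' ∨ (y j = y j' ∧ j < j')) → r j < r j' := by
    intro j j' h
    have hj : j ∉ univ.filter fun i => y i < y j ∨ (y i = y j ∧ i < j) := by
      simp
    have hsub : insert j (univ.filter fun i => y i < y j ∨ (y i = y j ∧ i < j)) ⊆
        univ.filter fun i => y i < y j' ∨ (y i = y j' ∧ i < j') := by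
      intro i hi
      rcases Finset.mem_insert.1 hi with rfl | hi
      · simpa using h
      · simp only [Finset.mem_filter, Finset.mem_univ, true_and] at hi ⊢
        rcases hi with hi | ⟨hie, hilt⟩ <;> rcases h with h | ⟨he, hlt'⟩
        · exact Or.inl (hi.trans h)
        · exact Or.inl (he ▸ hi)
        · exact Or.inl (hie ▸ h)
        · exact Or.inr ⟨hie.trans he, hilt.trans hlt'⟩
    calc r j < (insert j (univ.filter fun i => y i < y j ∨ (y i = y j ∧ i < j))).card := by
          rw [Finset.card_insert_of_notMem hj]; exact Nat.lt_succ_self _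
      _ ≤ r j' := Finset.card_le_card hsub
  have hinj : Function.Injective r := by
    intro j j' h
    by_contra hne
    rcases lt_trichotomy (y j) (y j') with hy | hy | hy
    · exact absurd h (Nat.ne_of_lt (hlt _ _ (Or.inl hy)))
    · rcases lt_or_gt_of_ne hne with hj | hj
      · exact absurd h (Nat.ne_of_lt (hlt _ _ (Or.inr ⟨hy, hj⟩)))
      · exact absurd h.symm (Nat.ne_of_lt (hlt _ _ (Or.inr ⟨hy.symm, hj⟩)))
    · exact absurd h.symm (Nat.ne_of_lt (hlt _ _ (Or.inl hy)))
  have hrk : ∀ j, (univ.filter fun i => i ≠ j ∧ y i ≤ y j).card < k → r j < k := by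
    intro j hj
    refine lt_of_le_of_lt (Finset.card_le_card fun i hi => ?_) hj
    simp only [Finset.mem_filter, Finset.mem_univ, true_and] at hi ⊢
    rcases hi with hi | ⟨he, hilt⟩
    · exact ⟨fun he => absurd (he ▸ hi) (lt_irrefl _), le_of_lt hi⟩
    · exact ⟨fun h => absurd (h ▸ hilt) (lt_irrefl _), le_of_eq he⟩
  calc (univ.filter fun j => (univ.filter fun i => i ≠ j ∧ y i ≤ y j).card < k).card
      = ((univ.filter fun j => (univ.filter fun i => i ≠ j ∧ y i ≤ y j).card < k).image r).card :=
        (Finset.card_image_of_injective _ hinj).symm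
    _ ≤ (Finset.range k).card := by
        refine Finset.card_le_card fun m hm => ?_
        simp only [Finset.mem_image, Finset.mem_filter] at hm
        obtain ⟨j, ⟨-, hj⟩, rfl⟩ := hm
        exact Finset.mem_range.2 (hrk j hj)
    _ = k := Finset.card_range k

/-- Relabeling by the swap of `j` and `t`. -/
lemma card_swap_eq (y : Fin N → ℝ) (j t : Fin N) :
    (univ.filter fun i => i ≠ t ∧ y (Equiv.swap j t i) ≤ y j).card =
      (univ.filter fun i => i ≠ j ∧ y i ≤ y j).card := by
  classical
  have hσt : Equiv.swap j t t = j := Equiv.swap_apply_right j t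
  refine Finset.card_bij (fun i _ => Equiv.swap j t i) ?_ ?_ ?_
  · intro i hi
    simp only [Finset.mem_filter, Finset.mem_univ, true_and] at hi ⊢
    exact ⟨fun h => hi.1 ((Equiv.swap j t).injective (h.trans hσt.symm)), hi.2⟩
  · intro i₁ _ i₂ _ h
    exact (Equiv.swap j t).injective h
  · intro i' hi'
    simp only [Finset.mem_filter, Finset.mem_univ, true_and] at hi'
    refine ⟨Equiv.swap j t i', Finset.mem_filter.2 ⟨Finset.mem_univ _, ?_, ?_⟩,
      Equiv.swap_apply_self _ _ _⟩
    · intro h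
      exact hi'.1 (by rw [← Equiv.swap_apply_self j t i', h, hσt])
    · rw [Equiv.swap_apply_self]; exact hi'.2

end Comb

section Aux

open Finset

lemma card_filter_snoc {n : ℕ} (v : Fin n → ℝ) (r : ℝ) :
    (univ.filter fun i : Fin (n+1) =>
        i ≠ Fin.last n ∧ (Fin.snoc v r : Fin (n + 1) → ℝ) i ≤
          (Fin.snoc v r : Fin (n + 1) → ℝ) (Fin.last n)).card
      = (univ.filter fun i : Fin n => v i ≤ r).card := by
  classical
  refine (Finset.card_bij (fun (i : Fin n) _ => Fin.castSucc i) ?_ ?_ ?_).symm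
  · intro i hi
    simp only [Finset.mem_filter, Finset.mem_univ, true_and] at hi ⊢
    refine ⟨(Fin.castSucc_lt_last i).ne, ?_⟩
    rw [Fin.snoc_castSucc, Fin.snoc_last]
    exact hi
  · intro i₁ _ i₂ _ h
    exact Fin.castSucc_injective _ h
  · intro j hj
    simp only [Finset.mem_filter, Finset.mem_univ, true_and] at hj
    obtain ⟨i, rfl⟩ := Fin.exists_castSucc_eq.mpr hj.1
    refine ⟨i, Finset.mem_filter.2 ⟨Finset.mem_univ _, ?_⟩, rfl⟩
    have := hj.2
    rwa [Fin.snoc_castSucc, Fin.snoc_last] at this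

lemma measurable_empQuantile_comp {n : ℕ} {Ω : Type*} [MeasurableSpace Ω] (Z : Fin n → Ω → ℝ)
    (hmeas : ∀ i, Measurable (Z i)) {q : ℝ} (hn : 1 ≤ n) (hq0 : 0 < q) (hq1 : q ≤ 1) :
    Measurable fun ω => empQuantile (fun i => Z i ω) q := by
  classical
  refine measurable_of_Iic fun t => ?_
  have hset : (fun ω => empQuantile (fun i => Z i ω) q) ⁻¹' Set.Iic t =
      {ω | ⌈(n : ℝ) * q⌉₊ ≤ (univ.filter fun i => Z i ω ≤ t).card} := by
    ext ω
    simp only [Set.mem_preimage, Set.mem_Iic, Set.mem_setOf_eq]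
    rw [← not_lt, lt_empQuantile_iff (fun i => Z i ω) hn hq0 hq1, not_lt]
  rw [hset]
  have hcard : Measurable fun ω => ((univ.filter fun i => Z i ω ≤ t).card : ℕ) := by
    simp only [Finset.card_filter]
    refine Finset.measurable_sum _ fun i _ => ?_
    exact Measurable.ite (measurableSet_le (hmeas i) measurable_const)
      measurable_const measurable_const
  exact hcard measurableSet_Ici

end Aux

/-- **Upper bound on the expected plug-in CDF value at the empirical quantile** of
i.i.d. finitely supported samples: `E[F(F̂⁻¹(q))] ≤ ⌈nq⌉/(n+1) + pmax`, where `pmax`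
is the largest atom of the common distribution. -/
theorem expected_cdf_empQuantile_le
    {Ω ι : Type*} [MeasurableSpace Ω] (P : Measure Ω) [IsProbabilityMeasure P]
    [Fintype ι] [Nonempty ι]
    (a : ι → ℝ)
    (n : ℕ) (hn : 1 ≤ n)
    (Z : Fin n → Ω → ℝ) (hmeas : ∀ i, Measurable (Z i))
    (hiid : iIndepFun Z P)
    (hident : ∀ i j, IdentDistrib (Z i) (Z j) P P)
    (hsupp : ∀ i ω, Z i ω ∈ Set.range a)
    (F : ℝ → ℝ) (hF : ∀ z, F z = (P {ω | Z ⟨0, hn⟩ ω ≤ z}).toReal)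
    (pmax : ℝ) (hpmax : pmax = ⨆ i, (P {ω | Z ⟨0, hn⟩ ω = a i}).toReal)
    (q : ℝ) (hq : q ∈ Set.Ioc (0 : ℝ) 1) :
    ∫ ω, F (empQuantile (fun i => Z i ω) q) ∂P ≤
      (⌈(n : ℝ) * q⌉₊ : ℝ) / ((n : ℝ) + 1) + pmax := by
  classical
  obtain ⟨hq0, hq1⟩ := hq
  set k := ⌈(n : ℝ) * q⌉₊ with hk
  set Z0 := Z ⟨0, hn⟩ with hZ0
  set μ := P.map Z0 with hμ
  haveI : IsProbabilityMeasure μ := Measure.isProbabilityMeasure_map (hmeas _).aemeasurable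
  set ν := Measure.pi (fun _ : Fin (n+1) => μ) with hν
  haveI : IsProbabilityMeasure ν := by rw [hν]; infer_instance
  set Qf : Ω → ℝ := fun ω => empQuantile (fun i => Z i ω) q with hQf
  have hQmeas : Measurable Qf := measurable_empQuantile_comp Z hmeas hn hq0 hq1
  set C : Fin (n+1) → Set (Fin (n+1) → ℝ) :=
    fun j => {y | (univ.filter fun i => i ≠ j ∧ y i ≤ y j).card < k} with hC
  have hCmeas : ∀ j, MeasurableSet (C j) := by
    intro j
    have hcard : Measurable fun y : Fin (n+1) → ℝ =>
        ((univ.filter fun i => i ≠ j ∧ y i ≤ y j).card : ℕ) := by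
      simp only [Finset.card_filter]
      refine Finset.measurable_sum _ fun i _ => ?_
      refine Measurable.ite ?_ measurable_const measurable_const
      have : {y : Fin (n+1) → ℝ | i ≠ j ∧ y i ≤ y j} =
          {y : Fin (n+1) → ℝ | i ≠ j} ∩ {y | y i ≤ y j} := rfl
      rw [this]
      exact (MeasurableSet.const _).inter
        (measurableSet_le (measurable_pi_apply i) (measurable_pi_apply j))
    exact hcard measurableSet_Iio
  -- law of the sample vector
  have hμi : ∀ i, P.map (Z i) = μ := fun i => (hident i ⟨0, hn⟩).map_eq
  have hvecmeas : Measurable fun ω => (fun i => Z i ω) := measurable_pi_lambda _ hmeas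
  have hvec : P.map (fun ω => fun i => Z i ω) = Measure.pi (fun _ : Fin n => μ) := by
    refine (Measure.pi_eq (μ := fun _ : Fin n => μ) fun s hs => ?_).symm
    rw [Measure.map_apply hvecmeas (MeasurableSet.univ_pi hs)]
    have hpre : (fun ω => fun i => Z i ω) ⁻¹' Set.univ.pi s = ⋂ i ∈ Finset.univ, Z i ⁻¹' s i := by
      ext ω; simp [Set.mem_pi]
    rw [hpre, hiid.measure_inter_preimage_eq_mul Finset.univ (fun i _ => hs i)]
    exact Finset.prod_congr rfl fun i _ => by
      rw [← hμi i, Measure.map_apply (hmeas i) (hs i)]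
  -- law of the extended vector
  set Y : Ω × Ω → (Fin (n+1) → ℝ) := fun w => Fin.snoc (fun i => Z i w.1) (Z0 w.2) with hYdef
  have hYmeas : Measurable Y := by
    refine measurable_pi_lambda _ fun j => ?_
    rcases eq_or_ne j (Fin.last n) with rfl | hj
    · simp only [hYdef, Fin.snoc_last]; exact (hmeas _).comp measurable_snd
    · obtain ⟨i, rfl⟩ := Fin.exists_castSucc_eq.mpr hj
      simp only [hYdef, Fin.snoc_castSucc]; exact (hmeas i).comp measurable_fst
  have hgmeas : Measurable fun w : Ω × Ω => ((Z0 w.2, fun i => Z i w.1) : ℝ × (Fin n → ℝ)) :=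
    ((hmeas _).comp measurable_snd).prodMk (hvecmeas.comp measurable_fst)
  have hg : (P.prod P).map (fun w : Ω × Ω => ((Z0 w.2, fun i => Z i w.1) : ℝ × (Fin n → ℝ)))
      = μ.prod (Measure.pi fun _ : Fin n => μ) := by
    have h1 : (fun w : Ω × Ω => ((Z0 w.2, fun i => Z i w.1) : ℝ × (Fin n → ℝ))) =
        (Prod.map Z0 (fun ω => fun i => Z i ω)) ∘ Prod.swap := rfl
    rw [h1, ← Measure.map_map ((hmeas _).prodMap hvecmeas) measurable_swap,
      Measure.prod_swap, ← Measure.map_prod_map _ _ (hmeas _) hvecmeas, hvec, ← hμ]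
  have hsnoc : Y = ((MeasurableEquiv.piFinSuccAbove (fun _ : Fin (n+1) => ℝ) (Fin.last n)).symm
      ∘ fun w : Ω × Ω => ((Z0 w.2, fun i => Z i w.1) : ℝ × (Fin n → ℝ))) := by
    funext w
    simp only [hYdef, Function.comp_apply, MeasurableEquiv.piFinSuccAbove,
      MeasurableEquiv.symm_mk, MeasurableEquiv.coe_mk, Equiv.symm_symm,
      Fin.insertNthEquiv_last]
    rfl
  have hps := MeasurePreserving.symm _
    (measurePreserving_piFinSuccAbove (fun _ : Fin (n+1) => μ) (Fin.last n))
  have hY : (P.prod P).map Y = ν := by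
    rw [hsnoc, ← Measure.map_map (MeasurableEquiv.measurable _) hgmeas, hg]
    exact hps.map_eq
  -- permutation invariance of ν
  have hcompmeas : ∀ σ : Equiv.Perm (Fin (n+1)),
      Measurable fun y : Fin (n+1) → ℝ => y ∘ σ :=
    fun σ => measurable_pi_lambda _ fun i => measurable_pi_apply _
  have hperm_map : ∀ σ : Equiv.Perm (Fin (n+1)), ν.map (fun y => y ∘ σ) = ν := by
    intro σ
    rw [hν]
    refine (Measure.pi_eq (μ := fun _ : Fin (n+1) => μ) fun s hs => ?_).symm
    rw [Measure.map_apply (hcompmeas σ) (MeasurableSet.univ_pi hs)]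
    have hpre : (fun y : Fin (n+1) → ℝ => y ∘ σ) ⁻¹' Set.univ.pi s =
        Set.univ.pi fun i => s (σ.symm i) := by
      ext y
      simp only [Set.mem_preimage, Set.mem_pi, Set.mem_univ, forall_const, Function.comp_apply]
      constructor
      · intro h i; simpa using h (σ.symm i)
      · intro h i; simpa using h (σ i)
    rw [hpre, Measure.pi_pi]
    exact Fintype.prod_equiv σ.symm _ _ fun i => rfl
  have hCν : ∀ j, ν (C j) = ν (C (Fin.last n)) := by
    intro j
    have hpre : (fun y : Fin (n+1) → ℝ => y ∘ (Equiv.swap j (Fin.last n))) ⁻¹' C (Fin.last n)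
        = C j := by
      ext y
      simp only [hC, Set.mem_preimage, Set.mem_setOf_eq, Function.comp_apply,
        Equiv.swap_apply_right]
      rw [card_swap_eq]
    conv_rhs => rw [← hperm_map (Equiv.swap j (Fin.last n))]
    rw [Measure.map_apply (hcompmeas _) (hCmeas _), hpre]
  -- sum bound
  have hsum : ∑ j : Fin (n+1), ν (C j) ≤ (k : ℝ≥0∞) := by
    calc ∑ j : Fin (n+1), ν (C j)
        = ∫⁻ y, ∑ j : Fin (n+1), (C j).indicator (fun _ => (1 : ℝ≥0∞)) y ∂ν := by
          rw [lintegral_finset_sum _ fun j _ => measurable_const.indicator (hCmeas j)]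
          exact Finset.sum_congr rfl fun j _ => (lintegral_indicator_one (hCmeas j)).symm
      _ ≤ ∫⁻ _, (k : ℝ≥0∞) ∂ν := by
          refine lintegral_mono fun y => ?_
          have hcount : ∑ j : Fin (n+1), (C j).indicator (fun _ => (1 : ℝ≥0∞)) y
              = ((univ.filter fun j : Fin (n+1) => y ∈ C j).card : ℝ≥0∞) := by
            rw [Finset.card_filter]
            push_cast
            refine Finset.sum_congr rfl fun j _ => ?_
            by_cases h : y ∈ C j <;> simp [Set.indicator_apply, h]
          rw [hcount]
          have := card_low_rank_le y k
          exact (Nat.cast_le (α := ℝ≥0∞)).2 (by simpa [hC] using this)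
      _ = (k : ℝ≥0∞) := by simp [measure_univ]
  have hlastν : ν (C (Fin.last n)) ≤ (k : ℝ≥0∞) / ((n : ℝ≥0∞) + 1) := by
    rw [ENNReal.le_div_iff_mul_le (Or.inl (by simp)) (Or.inl (by simp))]
    calc ν (C (Fin.last n)) * ((n : ℝ≥0∞) + 1)
        = ∑ j : Fin (n+1), ν (C j) := by
          rw [Finset.sum_congr rfl fun j _ => hCν j, Finset.sum_const, Finset.card_univ,
            Fintype.card_fin, nsmul_eq_mul, mul_comm]
          push_cast
          ring
      _ ≤ (k : ℝ≥0∞) := hsum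
  -- the event and Fubini
  set E : Set (Ω × Ω) := {w | Z0 w.2 < Qf w.1} with hE
  have hEmeas : MeasurableSet E :=
    measurableSet_lt ((hmeas _).comp measurable_snd) (hQmeas.comp measurable_fst)
  have hEeq : E = Y ⁻¹' (C (Fin.last n)) := by
    ext w
    simp only [hE, hC, hYdef, hQf, Set.mem_setOf_eq, Set.mem_preimage]
    rw [lt_empQuantile_iff _ hn hq0 hq1, card_filter_snoc]
  have hEν : (P.prod P) E = ν (C (Fin.last n)) := by
    rw [hEeq, ← hY, Measure.map_apply hYmeas (hCmeas _)]
  have hfub : ∫ ω, (P {ω' | Z0 ω' < Qf ω}).toReal ∂P = ((P.prod P) E).toReal := by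
    rw [Measure.prod_apply hEmeas,
      ← integral_toReal (measurable_measure_prodMk_left hEmeas).aemeasurable
        (ae_of_all _ fun ω => measure_lt_top _ _)]
    rfl
  -- pointwise bound
  have htoReal_le_one : ∀ s : Set Ω, (P s).toReal ≤ 1 := fun s => by
    calc (P s).toReal ≤ (1 : ℝ≥0∞).toReal := ENNReal.toReal_mono ENNReal.one_ne_top prob_le_one
      _ = 1 := ENNReal.toReal_one
  have hpoint : ∀ ω, F (Qf ω) ≤ (P {ω' | Z0 ω' < Qf ω}).toReal + pmax := by
    intro ω
    obtain ⟨i0, hi0⟩ := empQuantile_mem_range (fun i => Z i ω) hn hq0 hq1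
    obtain ⟨j0, hj0⟩ := hsupp i0 ω
    have hzval : Qf ω = a j0 := by
      rw [show Qf ω = empQuantile (fun i => Z i ω) q from rfl, ← hi0, ← hj0]
    have hsplit : {ω' | Z0 ω' ≤ Qf ω} = {ω' | Z0 ω' < Qf ω} ∪ {ω' | Z0 ω' = Qf ω} := by
      ext ω'; simp only [Set.mem_setOf_eq, Set.mem_union]; exact le_iff_lt_or_eq
    have hdisj : Disjoint {ω' | Z0 ω' < Qf ω} {ω' | Z0 ω' = Qf ω} :=
      Set.disjoint_left.2 fun ω' h1 h2 => by
        simp only [Set.mem_setOf_eq] at h1 h2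
        linarith
    have hmeas2 : MeasurableSet {ω' | Z0 ω' = Qf ω} :=
      (hmeas ⟨0, hn⟩) (measurableSet_singleton _)
    rw [hF, hsplit, measure_union hdisj hmeas2,
      ENNReal.toReal_add (measure_ne_top _ _) (measure_ne_top _ _)]
    refine add_le_add le_rfl ?_
    rw [hpmax]
    have h2 : {ω' | Z0 ω' = Qf ω} = {ω' | Z0 ω' = a j0} := by rw [hzval]
    rw [h2]
    exact le_ciSup (f := fun i => (P {ω' | Z0 ω' = a i}).toReal) (Set.Finite.bddAbove (Set.finite_range _)) j0
  -- integrability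
  have hFm : Measurable fun ω => (P {ω' | Z0 ω' < Qf ω}).toReal := by
    have hid : ∀ ω, {ω' | Z0 ω' < Qf ω} = Prod.mk ω ⁻¹' E := fun ω => rfl
    simp only [hid]
    exact (measurable_measure_prodMk_left hEmeas).ennreal_toReal
  have hFmono : Monotone F := by
    intro z1 z2 h
    rw [hF, hF]
    exact ENNReal.toReal_mono (measure_ne_top _ _)
      (measure_mono fun ω' hω' => le_trans hω' h)
  have hFQmeas : Measurable fun ω => F (Qf ω) := hFmono.measurable.comp hQmeas
  have hint1 : Integrable (fun ω => F (Qf ω)) P := by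
    refine (integrable_const (1 : ℝ)).mono' hFQmeas.aestronglyMeasurable (ae_of_all _ fun ω => ?_)
    rw [hF, Real.norm_eq_abs, abs_of_nonneg ENNReal.toReal_nonneg]
    exact htoReal_le_one _
  have hint2 : Integrable (fun ω => (P {ω' | Z0 ω' < Qf ω}).toReal) P := by
    refine (integrable_const (1 : ℝ)).mono' hFm.aestronglyMeasurable (ae_of_all _ fun ω => ?_)
    rw [Real.norm_eq_abs, abs_of_nonneg ENNReal.toReal_nonneg]
    exact htoReal_le_one _
  -- final chain
  calc ∫ ω, F (empQuantile (fun i => Z i ω) q) ∂P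
      = ∫ ω, F (Qf ω) ∂P := rfl
    _ ≤ ∫ ω, ((P {ω' | Z0 ω' < Qf ω}).toReal + pmax) ∂P :=
        integral_mono hint1 (hint2.add (integrable_const _)) hpoint
    _ = ∫ ω, (P {ω' | Z0 ω' < Qf ω}).toReal ∂P + pmax := by
        rw [integral_add hint2 (integrable_const _), integral_const]
        simp
    _ = ((P.prod P) E).toReal + pmax := by rw [hfub]
    _ = (ν (C (Fin.last n))).toReal + pmax := by rw [hEν]
    _ ≤ ((k : ℝ≥0∞) / ((n : ℝ≥0∞) + 1)).toReal + pmax := by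
        refine add_le_add ?_ le_rfl
        exact ENNReal.toReal_mono ((ENNReal.div_lt_top (by simp) (by simp)).ne) hlastν
    _ = (k : ℝ) / ((n : ℝ) + 1) + pmax := by
        rw [ENNReal.toReal_div,
          show ((n : ℝ≥0∞) + 1) = ((n + 1 : ℕ) : ℝ≥0∞) by push_cast; ring,
          ENNReal.toReal_natCast, ENNReal.toReal_natCast]
        push_cast
        ring
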